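/- Let H be a separable complex Hilbert space, M a linear operator with domain D(M) ⊆ H, and (L_k) a countable family of linear maps L_k : D(M) → H satisfying Σ_k ‖L_k φ‖² = 2 Re⟨φ, Mφ⟩ for all φ ∈ D(M). Define on matrix units the superoperators M(|φ⟩⟨ψ|) := |Mφ⟩⟨ψ| + |φ⟩⟨Mψ| and L_+(|φ⟩⟨ψ|) := Σ_k |L_kφ⟩⟨L_kψ|. Let ε > 0 and let (φ, ψ) and (e, f) be pairs in D(M) with ‖φ−e‖ ≤ ε, ‖Mφ−Me‖ ≤ ε, ‖ψ−f‖ ≤ ε, ‖Mψ−Mf‖ ≤ ε. Then both ‖M(|φ⟩⟨ψ|) − M(|e⟩⟨f|)‖₁ and ‖L_+(|φ⟩⟨ψ|) − L_+(|e⟩⟨f|)‖₁ are at most ε·(‖φ‖ + ‖Mφ‖ + ‖ψ‖ + ‖Mψ‖ + 2ε). -/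
import Mathlib


open Filter Set
open scoped InnerProductSpace ComplexConjugate ComplexOrder Topology ComplexInnerProductSpace

noncomputable section

variable {H T : Type*}

/-- An abstract model of the Banach space `𝔗(H)` of trace-class operators on the Hilbert
space `H`, equipped with the trace norm `‖·‖₁`: a Banach space `T` acting injectively as
bounded operators on `H`, containing all rank-one operators `|x⟩⟨y|` (with
`‖ |x⟩⟨y| ‖₁ = ‖x‖·‖y‖`, their span being dense), together with the trace functional. -/
structure TraceClassModel (H T : Type*) [NormedAddCommGroup H] [InnerProductSpace ℂ H]
    [NormedAddCommGroup T] [NormedSpace ℂ T] where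
  /-- a trace-class operator acts as a bounded operator on `H` -/
  toCLM : T →ₗ[ℂ] (H →L[ℂ] H)
  toCLM_injective : Function.Injective toCLM
  /-- the rank-one operator `|x⟩⟨y| : z ↦ ⟪y, z⟫ • x` as a trace-class operator -/
  rankOne : H → H → T
  toCLM_rankOne : ∀ x y z : H, toCLM (rankOne x y) z = ⟪y, z⟫_ℂ • x
  norm_rankOne : ∀ x y : H, ‖rankOne x y‖ = ‖x‖ * ‖y‖
  dense_span_rankOne :
    Dense ((Submodule.span ℂ (Set.range fun p : H × H => rankOne p.1 p.2) : Submodule ℂ T) : Set T)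
  /-- the trace, a continuous linear functional for the trace norm -/
  trace : T →L[ℂ] ℂ
  trace_rankOne : ∀ x y : H, trace (rankOne x y) = ⟪y, x⟫_ℂ

variable [NormedAddCommGroup H] [InnerProductSpace ℂ H] [CompleteSpace H]
  [NormedAddCommGroup T] [NormedSpace ℂ T] [CompleteSpace T]

/-- The standard criterion for complete positivity of a map on trace-class operators:
`∑_{k,ℓ} ⟪ψ_k, P(|φ_k⟩⟨φ_ℓ|) ψ_ℓ⟫ ≥ 0` for all finite families of vectors. -/
def TraceClassModel.IsCPMap (Mod : TraceClassModel H T) (P : T → T) : Prop :=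
  ∀ (N : ℕ) (φ ψ : Fin N → H),
    0 ≤ ∑ k, ∑ l, ⟪ψ k, Mod.toCLM (P (Mod.rankOne (φ k) (φ l))) (ψ l)⟫_ℂ

/-- A quantum dynamical semigroup: a strongly continuous semigroup of trace-preserving
completely positive linear maps on the trace class. -/
structure QDS {H T : Type*} [NormedAddCommGroup H] [InnerProductSpace ℂ H]
    [NormedAddCommGroup T] [NormedSpace ℂ T] (Mod : TraceClassModel H T) where
  map : ℝ → T →L[ℂ] T
  map_zero : map 0 = ContinuousLinearMap.id ℂ T
  map_add : ∀ s t : ℝ, 0 ≤ s → 0 ≤ t → map (s + t) = (map s).comp (map t)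
  strong_continuity : ∀ ρ : T, ContinuousOn (fun t : ℝ => map t ρ) (Ici 0)
  trace_preserving : ∀ t : ℝ, 0 ≤ t → ∀ ρ : T, Mod.trace (map t ρ) = Mod.trace ρ
  completely_positive : ∀ t : ℝ, 0 ≤ t → Mod.IsCPMap (map t)

variable {Mod : TraceClassModel H T}

/-- `σ = lim_{t→0+} (T^t ρ - ρ)/t` in trace norm. -/
def QDS.HasGenDerivAt (S : QDS Mod) (ρ σ : T) : Prop :=
  Tendsto (fun t : ℝ => (t : ℂ)⁻¹ • (S.map t ρ - ρ)) (𝓝[>] 0) (𝓝 σ)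

/-- The generator of a QDS: the function `L` defined on its maximal domain `Dom`,
consisting of all `ρ` for which `(T^t ρ - ρ)/t` converges in trace norm as `t → 0+`. -/
structure QDS.Generator {H T : Type*} [NormedAddCommGroup H] [InnerProductSpace ℂ H]
    [NormedAddCommGroup T] [NormedSpace ℂ T] {Mod : TraceClassModel H T} (S : QDS Mod) where
  Dom : Set T
  L : T → T
  mem_dom_iff : ∀ ρ : T, ρ ∈ Dom ↔ ∃ σ, S.HasGenDerivAt ρ σ
  hasGenDerivAt : ∀ ρ ∈ Dom, S.HasGenDerivAt ρ (L ρ)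

/-- `D` is a core for the operator `L` with domain `Dom`: `D ⊆ Dom` and `D` is dense in
`Dom` with respect to the graph norm `‖ρ‖ + ‖L ρ‖`. -/
def IsCoreFor {E : Type*} [NormedAddCommGroup E] (L : E → E) (Dom D : Set E) : Prop :=
  D ⊆ Dom ∧ ∀ ρ ∈ Dom, ∀ ε : ℝ, 0 < ε → ∃ σ ∈ D, ‖ρ - σ‖ + ‖L ρ - L σ‖ < ε

/-- `e` is an orthonormal basis of `H`. -/
def IsONBasis {ι : Type*} (e : ι → H) : Prop :=
  Orthonormal ℂ e ∧ Dense ((Submodule.span ℂ (Set.range e) : Submodule ℂ H) : Set H)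

/-- `D_e²`: the linear span of the matrix units `|e_k⟩⟨e_ℓ|` of the basis `e`. -/
def TraceClassModel.De2 (Mod : TraceClassModel H T) {ι : Type*} (e : ι → H) : Set T :=
  (Submodule.span ℂ (Set.range fun p : ι × ι => Mod.rankOne (e p.1) (e p.2)) : Submodule ℂ T)

/-- The QDS is matrix normal with respect to the orthonormal basis `e`:
`D_e²` is a core for the generator. -/
def QDS.Generator.MatrixNormal {S : QDS Mod} (G : S.Generator) {ι : Type*} (e : ι → H) : Prop :=
  IsONBasis e ∧ IsCoreFor G.L G.Dom (Mod.De2 e)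

/-- `M` (a densely defined unbounded operator on `H`) generates a strongly continuous
contraction semigroup `C t = e^{-tM}` on `H`, whose generator `-M` has domain exactly
`M.domain`. -/
def GeneratesContractionSemigroupPMap (M : H →ₗ.[ℂ] H) : Prop :=
  ∃ C : ℝ → H →L[ℂ] H,
    C 0 = ContinuousLinearMap.id ℂ H ∧
    (∀ s t : ℝ, 0 ≤ s → 0 ≤ t → C (s + t) = (C s).comp (C t)) ∧
    (∀ t : ℝ, 0 ≤ t → ‖C t‖ ≤ 1) ∧
    (∀ ψ : H, ContinuousOn (fun t : ℝ => C t ψ) (Ici 0)) ∧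
    (∀ ψ : H, ψ ∈ M.domain ↔
      ∃ η, Tendsto (fun t : ℝ => (t : ℂ)⁻¹ • (C t ψ - ψ)) (𝓝[>] 0) (𝓝 η)) ∧
    (∀ φ : M.domain,
      Tendsto (fun t : ℝ => (t : ℂ)⁻¹ • (C t (φ : H) - (φ : H))) (𝓝[>] 0) (𝓝 (-(M φ))))

/-- `Mf : H → H`, restricted to `D`, generates a strongly continuous contraction semigroup
`C t = e^{-tMf}` on `H`, whose generator `-Mf` has domain exactly `D`. -/
def GeneratesContractionSemigroupOn (Mf : H → H) (D : Set H) : Prop :=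
  ∃ C : ℝ → H →L[ℂ] H,
    C 0 = ContinuousLinearMap.id ℂ H ∧
    (∀ s t : ℝ, 0 ≤ s → 0 ≤ t → C (s + t) = (C s).comp (C t)) ∧
    (∀ t : ℝ, 0 ≤ t → ‖C t‖ ≤ 1) ∧
    (∀ ψ : H, ContinuousOn (fun t : ℝ => C t ψ) (Ici 0)) ∧
    (∀ ψ : H, ψ ∈ D ↔
      ∃ η, Tendsto (fun t : ℝ => (t : ℂ)⁻¹ • (C t ψ - ψ)) (𝓝[>] 0) (𝓝 η)) ∧
    (∀ ψ ∈ D, Tendsto (fun t : ℝ => (t : ℂ)⁻¹ • (C t ψ - ψ)) (𝓝[>] 0) (𝓝 (-Mf ψ)))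


lemma TraceClassModel.rankOne_sub_left (Mod : TraceClassModel H T) (x x' y : H) :
    Mod.rankOne (x - x') y = Mod.rankOne x y - Mod.rankOne x' y := by
  apply Mod.toCLM_injective
  rw [map_sub]
  ext z
  simp [Mod.toCLM_rankOne, smul_sub]

lemma TraceClassModel.rankOne_sub_right (Mod : TraceClassModel H T) (x y y' : H) :
    Mod.rankOne x (y - y') = Mod.rankOne x y - Mod.rankOne x y' := by
  apply Mod.toCLM_injective
  rw [map_sub]
  ext z
  simp [Mod.toCLM_rankOne, inner_sub_left, sub_smul]

lemma aux_tsum_mul_le (a b : ℕ → ℝ) (ha : ∀ k, 0 ≤ a k) (hb : ∀ k, 0 ≤ b k)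
    (hsa : Summable fun k => a k ^ 2) (hsb : Summable fun k => b k ^ 2) :
    ∑' k, a k * b k ≤ Real.sqrt (∑' k, a k ^ 2) * Real.sqrt (∑' k, b k ^ 2) := by
  have hsab : Summable fun k => a k * b k := by
    refine Summable.of_nonneg_of_le (fun k => mul_nonneg (ha k) (hb k)) (fun k => ?_)
      ((hsa.add hsb).div_const 2)
    nlinarith [sq_nonneg (a k - b k)]
  refine Summable.tsum_le_of_sum_le hsab fun s => ?_
  have h1 : (∑ k ∈ s, a k * b k) ^ 2 ≤ (∑ k ∈ s, a k ^ 2) * ∑ k ∈ s, b k ^ 2 :=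
    Finset.sum_mul_sq_le_sq_mul_sq s a b
  have h2 : (∑ k ∈ s, a k ^ 2) ≤ ∑' k, a k ^ 2 :=
    Summable.sum_le_tsum s (fun k _ => sq_nonneg _) hsa
  have h3 : (∑ k ∈ s, b k ^ 2) ≤ ∑' k, b k ^ 2 :=
    Summable.sum_le_tsum s (fun k _ => sq_nonneg _) hsb
  have h4 : (∑ k ∈ s, a k * b k) ^ 2 ≤ (∑' k, a k ^ 2) * ∑' k, b k ^ 2 := by
    calc (∑ k ∈ s, a k * b k) ^ 2 ≤ (∑ k ∈ s, a k ^ 2) * ∑ k ∈ s, b k ^ 2 := h1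
    _ ≤ (∑' k, a k ^ 2) * ∑' k, b k ^ 2 := by
        apply mul_le_mul h2 h3 (Finset.sum_nonneg fun k _ => sq_nonneg _)
          (le_trans (Finset.sum_nonneg fun k _ => sq_nonneg _) h2)
  calc (∑ k ∈ s, a k * b k) = Real.sqrt ((∑ k ∈ s, a k * b k) ^ 2) :=
        (Real.sqrt_sq (Finset.sum_nonneg fun k _ => mul_nonneg (ha k) (hb k))).symm
  _ ≤ Real.sqrt ((∑' k, a k ^ 2) * ∑' k, b k ^ 2) := Real.sqrt_le_sqrt h4
  _ = Real.sqrt (∑' k, a k ^ 2) * Real.sqrt (∑' k, b k ^ 2) := Real.sqrt_mul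
        (tsum_nonneg fun k => sq_nonneg _) _

lemma aux_sq_bound1 (p q e : ℝ) (he : 0 ≤ e) :
    (2 * e * e) * (2 * p * q) ≤ (e * (p + q)) ^ 2 := by
  nlinarith [mul_nonneg (mul_nonneg he he) (sq_nonneg (p - q))]

lemma aux_sq_bound2 (p q e : ℝ) (he : 0 ≤ e) :
    (2 * (p + e) * (q + e)) * (2 * e * e) ≤ (e * (p + q + 2 * e)) ^ 2 := by
  nlinarith [mul_nonneg (mul_nonneg he he) (sq_nonneg (p - q))]

set_option maxHeartbeats 1000000 in
/-- Lemma 3, approximation in graph norm: with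
`∑_k ‖L_k φ‖² = 2 Re⟨φ, Mφ⟩` on `D(M)`, if the pairs `(φ, ψ)` and `(e, f)` in `D(M)` are
`ε`-close in the graph of `M`, then both
`‖M(|φ⟩⟨ψ|) − M(|e⟩⟨f|)‖₁` and `‖L₊(|φ⟩⟨ψ|) − L₊(|e⟩⟨f|)‖₁` are bounded by
`ε·(‖φ‖ + ‖Mφ‖ + ‖ψ‖ + ‖Mψ‖ + 2ε)`. -/
theorem expander_graph_approx [TopologicalSpace.SeparableSpace H]
    (M : H →ₗ.[ℂ] H) (Lk : ℕ → M.domain →ₗ[ℂ] H)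
    (hsum : ∀ φ : M.domain, Summable fun k => ‖Lk k φ‖ ^ 2)
    (hnormsq : ∀ φ : M.domain, ∑' k, ‖Lk k φ‖ ^ 2 = 2 * (⟪(φ : H), M φ⟫_ℂ).re)
    (ε : ℝ) (hε : 0 < ε) (φ ψ ee ff : M.domain)
    (h1 : ‖(φ : H) - (ee : H)‖ ≤ ε) (h2 : ‖M φ - M ee‖ ≤ ε)
    (h3 : ‖(ψ : H) - (ff : H)‖ ≤ ε) (h4 : ‖M ψ - M ff‖ ≤ ε) :
    ‖(Mod.rankOne (M φ) (ψ : H) + Mod.rankOne (φ : H) (M ψ))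
        - (Mod.rankOne (M ee) (ff : H) + Mod.rankOne (ee : H) (M ff))‖
      ≤ ε * (‖(φ : H)‖ + ‖M φ‖ + ‖(ψ : H)‖ + ‖M ψ‖ + 2 * ε) ∧
    (Summable fun k => Mod.rankOne (Lk k φ) (Lk k ψ)) ∧
    (Summable fun k => Mod.rankOne (Lk k ee) (Lk k ff)) ∧
    ‖(∑' k, Mod.rankOne (Lk k φ) (Lk k ψ)) - ∑' k, Mod.rankOne (Lk k ee) (Lk k ff)‖
      ≤ ε * (‖(φ : H)‖ + ‖M φ‖ + ‖(ψ : H)‖ + ‖M ψ‖ + 2 * ε) := by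
  have hMee : ‖M ee‖ ≤ ‖M φ‖ + ε := by
    have := norm_sub_norm_le (M ee) (M φ)
    rw [norm_sub_rev] at this
    linarith
  have hee : ‖(ee : H)‖ ≤ ‖(φ : H)‖ + ε := by
    have := norm_sub_norm_le ((ee : H)) ((φ : H))
    rw [norm_sub_rev] at this
    linarith
  have hA : ‖(Mod.rankOne (M φ) (ψ : H) + Mod.rankOne (φ : H) (M ψ))
        - (Mod.rankOne (M ee) (ff : H) + Mod.rankOne (ee : H) (M ff))‖
      ≤ ε * (‖(φ : H)‖ + ‖M φ‖ + ‖(ψ : H)‖ + ‖M ψ‖ + 2 * ε) := by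
    have heq : (Mod.rankOne (M φ) (ψ : H) + Mod.rankOne (φ : H) (M ψ))
        - (Mod.rankOne (M ee) (ff : H) + Mod.rankOne (ee : H) (M ff))
      = Mod.rankOne (M φ - M ee) (ψ : H) + Mod.rankOne (M ee) ((ψ : H) - (ff : H))
        + (Mod.rankOne ((φ : H) - (ee : H)) (M ψ) + Mod.rankOne (ee : H) (M ψ - M ff)) := by
      rw [Mod.rankOne_sub_left, Mod.rankOne_sub_right, Mod.rankOne_sub_left,
        Mod.rankOne_sub_right]
      abel
    rw [heq]
    refine le_trans ((norm_add_le _ _).trans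
      (add_le_add (norm_add_le _ _) (norm_add_le _ _))) ?_
    rw [Mod.norm_rankOne, Mod.norm_rankOne, Mod.norm_rankOne, Mod.norm_rankOne]
    have t1 : ‖M φ - M ee‖ * ‖(ψ : H)‖ ≤ ε * ‖(ψ : H)‖ :=
      mul_le_mul_of_nonneg_right h2 (norm_nonneg _)
    have t2 : ‖M ee‖ * ‖(ψ : H) - (ff : H)‖ ≤ (‖M φ‖ + ε) * ε :=
      mul_le_mul hMee h3 (norm_nonneg _) (by positivity)
    have t3 : ‖(φ : H) - (ee : H)‖ * ‖M ψ‖ ≤ ε * ‖M ψ‖ :=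
      mul_le_mul_of_nonneg_right h1 (norm_nonneg _)
    have t4 : ‖(ee : H)‖ * ‖M ψ - M ff‖ ≤ (‖(φ : H)‖ + ε) * ε :=
      mul_le_mul hee h4 (norm_nonneg _) (by positivity)
    nlinarith [t1, t2, t3, t4]
  have hsq : ∀ χ : M.domain, (∑' k, ‖Lk k χ‖ ^ 2) ≤ 2 * ‖(χ : H)‖ * ‖M χ‖ := by
    intro χ
    rw [hnormsq χ]
    have := re_inner_le_norm (𝕜 := ℂ) (χ : H) (M χ)
    simp only [RCLike.re_to_complex] at this
    linarith
  have sum_mul : ∀ χ ξ : M.domain, Summable fun k => ‖Lk k χ‖ * ‖Lk k ξ‖ := by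
    intro χ ξ
    refine Summable.of_nonneg_of_le (fun k => mul_nonneg (norm_nonneg _) (norm_nonneg _))
      (fun k => ?_) (((hsum χ).add (hsum ξ)).div_const 2)
    nlinarith [sq_nonneg (‖Lk k χ‖ - ‖Lk k ξ‖)]
  have hsummable : ∀ χ ξ : M.domain, Summable fun k => Mod.rankOne (Lk k χ) (Lk k ξ) := by
    intro χ ξ
    apply Summable.of_norm
    simp_rw [Mod.norm_rankOne]
    exact sum_mul χ ξ
  have hCS : ∀ χ ξ : M.domain, (∑' k, ‖Lk k χ‖ * ‖Lk k ξ‖)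
      ≤ Real.sqrt (∑' k, ‖Lk k χ‖ ^ 2) * Real.sqrt (∑' k, ‖Lk k ξ‖ ^ 2) :=
    fun χ ξ => aux_tsum_mul_le _ _ (fun k => norm_nonneg _) (fun k => norm_nonneg _)
      (hsum χ) (hsum ξ)
  refine ⟨hA, hsummable φ ψ, hsummable ee ff, ?_⟩
  have hφe : ‖((φ - ee : M.domain) : H)‖ ≤ ε := by
    rwa [AddSubgroupClass.coe_sub]
  have hMφe : ‖M (φ - ee)‖ ≤ ε := by rwa [M.map_sub]
  have hψf : ‖((ψ - ff : M.domain) : H)‖ ≤ ε := by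
    rwa [AddSubgroupClass.coe_sub]
  have hMψf : ‖M (ψ - ff)‖ ≤ ε := by rwa [M.map_sub]
  have hbound : ∀ k, ‖Mod.rankOne (Lk k φ) (Lk k ψ) - Mod.rankOne (Lk k ee) (Lk k ff)‖
      ≤ ‖Lk k (φ - ee)‖ * ‖Lk k ψ‖ + ‖Lk k ee‖ * ‖Lk k (ψ - ff)‖ := by
    intro k
    have hd : Mod.rankOne (Lk k φ) (Lk k ψ) - Mod.rankOne (Lk k ee) (Lk k ff)
        = Mod.rankOne (Lk k (φ - ee)) (Lk k ψ) + Mod.rankOne (Lk k ee) (Lk k (ψ - ff)) := by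
      rw [map_sub, map_sub, Mod.rankOne_sub_left, Mod.rankOne_sub_right]
      abel
    rw [hd]
    refine (norm_add_le _ _).trans ?_
    rw [Mod.norm_rankOne, Mod.norm_rankOne]
  have hHasSum : HasSum (fun k => ‖Lk k (φ - ee)‖ * ‖Lk k ψ‖ + ‖Lk k ee‖ * ‖Lk k (ψ - ff)‖)
      ((∑' k, ‖Lk k (φ - ee)‖ * ‖Lk k ψ‖) + ∑' k, ‖Lk k ee‖ * ‖Lk k (ψ - ff)‖) :=
    (sum_mul (φ - ee) ψ).hasSum.add (sum_mul ee (ψ - ff)).hasSum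
  rw [← Summable.tsum_sub (hsummable φ ψ) (hsummable ee ff)]
  refine le_trans (tsum_of_norm_bounded hHasSum hbound) ?_
  -- numeric estimates
  have A2nn : 0 ≤ ∑' k, ‖Lk k (φ - ee)‖ ^ 2 := tsum_nonneg fun k => sq_nonneg _
  have B2nn : 0 ≤ ∑' k, ‖Lk k ee‖ ^ 2 := tsum_nonneg fun k => sq_nonneg _
  have C2nn : 0 ≤ ∑' k, ‖Lk k ψ‖ ^ 2 := tsum_nonneg fun k => sq_nonneg _
  have D2nn : 0 ≤ ∑' k, ‖Lk k (ψ - ff)‖ ^ 2 := tsum_nonneg fun k => sq_nonneg _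
  have hA2 : (∑' k, ‖Lk k (φ - ee)‖ ^ 2) ≤ 2 * ε * ε := by
    refine (hsq (φ - ee)).trans ?_
    have := mul_le_mul hφe hMφe (norm_nonneg _) hε.le
    linarith
  have hC2 : (∑' k, ‖Lk k ψ‖ ^ 2) ≤ 2 * ‖(ψ : H)‖ * ‖M ψ‖ := hsq ψ
  have hB2 : (∑' k, ‖Lk k ee‖ ^ 2) ≤ 2 * (‖(φ : H)‖ + ε) * (‖M φ‖ + ε) := by
    refine (hsq ee).trans ?_
    have := mul_le_mul hee hMee (norm_nonneg _) (by positivity)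
    linarith
  have hD2 : (∑' k, ‖Lk k (ψ - ff)‖ ^ 2) ≤ 2 * ε * ε := by
    refine (hsq (ψ - ff)).trans ?_
    have := mul_le_mul hψf hMψf (norm_nonneg _) hε.le
    linarith
  have hS1 : (∑' k, ‖Lk k (φ - ee)‖ * ‖Lk k ψ‖) ≤ ε * (‖(ψ : H)‖ + ‖M ψ‖) := by
    refine (hCS (φ - ee) ψ).trans ?_
    rw [← Real.sqrt_mul A2nn]
    have hle : (∑' k, ‖Lk k (φ - ee)‖ ^ 2) * (∑' k, ‖Lk k ψ‖ ^ 2)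
        ≤ (ε * (‖(ψ : H)‖ + ‖M ψ‖)) ^ 2 := by
      have h1 : (∑' k, ‖Lk k (φ - ee)‖ ^ 2) * (∑' k, ‖Lk k ψ‖ ^ 2)
          ≤ (2 * ε * ε) * (2 * ‖(ψ : H)‖ * ‖M ψ‖) :=
        mul_le_mul hA2 hC2 C2nn (by positivity)
      exact h1.trans (aux_sq_bound1 _ _ _ hε.le)
    calc Real.sqrt ((∑' k, ‖Lk k (φ - ee)‖ ^ 2) * ∑' k, ‖Lk k ψ‖ ^ 2)
        ≤ Real.sqrt ((ε * (‖(ψ : H)‖ + ‖M ψ‖)) ^ 2) := Real.sqrt_le_sqrt hle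
      _ = ε * (‖(ψ : H)‖ + ‖M ψ‖) := Real.sqrt_sq (by positivity)
  have hS2 : (∑' k, ‖Lk k ee‖ * ‖Lk k (ψ - ff)‖) ≤ ε * (‖(φ : H)‖ + ‖M φ‖ + 2 * ε) := by
    refine (hCS ee (ψ - ff)).trans ?_
    rw [← Real.sqrt_mul B2nn]
    have hle : (∑' k, ‖Lk k ee‖ ^ 2) * (∑' k, ‖Lk k (ψ - ff)‖ ^ 2)
        ≤ (ε * (‖(φ : H)‖ + ‖M φ‖ + 2 * ε)) ^ 2 := by
      have h1 : (∑' k, ‖Lk k ee‖ ^ 2) * (∑' k, ‖Lk k (ψ - ff)‖ ^ 2)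
          ≤ (2 * (‖(φ : H)‖ + ε) * (‖M φ‖ + ε)) * (2 * ε * ε) :=
        mul_le_mul hB2 hD2 D2nn (by positivity)
      exact h1.trans (aux_sq_bound2 _ _ _ hε.le)
    calc Real.sqrt ((∑' k, ‖Lk k ee‖ ^ 2) * ∑' k, ‖Lk k (ψ - ff)‖ ^ 2)
        ≤ Real.sqrt ((ε * (‖(φ : H)‖ + ‖M φ‖ + 2 * ε)) ^ 2) := Real.sqrt_le_sqrt hle
      _ = ε * (‖(φ : H)‖ + ‖M φ‖ + 2 * ε) := Real.sqrt_sq (by positivity)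
  linarith


end
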